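/- Let (X,d,δ) be a dilatation structure and A : X → X a linear transformation. Then: (a) for all x ∈ X, ε ∈ Γ with ν(ε) < 1, and u, v ∈ U(x) sufficiently close to x, A(Σ_ε^x(u,v)) = Σ_ε^{A(x)}(A(u), A(v)); (b) if the dilatation structure is strong, then for all x ∈ X and u ∈ U(x) sufficiently close to x, A(inv^x(u)) = inv^{A(x)}(A(u)). -/

import Mathlib

open Metric Set

/-- A dilatation structure `(X,d,δ)` in the sense of Buliga.  `Γ` is a separated
commutative topological group endowed with a continuous morphism `ν : Γ → (0,∞)`
with `inf ν(Γ) = 0`.  For every point `x` and every `ε ∈ Γ` with `ν ε ≤ 1` the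
dilatation `δ ε x` is a homeomorphism from an open neighbourhood `U x` of `x`
onto an open neighbourhood `V ε x` of `x`, subject to the axioms A0–A3. -/
structure DilatationStructure (Γ : Type*) [CommGroup Γ] [TopologicalSpace Γ]
    (X : Type*) [MetricSpace X] where
  /-- the morphism `ν : Γ → (0,∞)` -/
  ν : Γ → ℝ
  ν_pos : ∀ ε, 0 < ν ε
  ν_mul : ∀ ε μ, ν (ε * μ) = ν ε * ν μ
  ν_cont : Continuous ν
  ν_inf : ∀ a : ℝ, 0 < a → ∃ ε, ν ε < a
  /-- the dilatations: `δ ε x y` is `δ_ε^x y` -/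
  δ : Γ → X → X → X
  U : X → Set X
  V : Γ → X → Set X
  W : Γ → X → Set X
  rA : ℝ
  rB : ℝ
  one_lt_rB : 1 < rB
  rB_le_rA : rB ≤ rA
  U_open : ∀ x, IsOpen (U x)
  U_mem : ∀ x, x ∈ U x
  V_open : ∀ ε x, ν ε ≤ 1 → IsOpen (V ε x)
  V_mem : ∀ ε x, ν ε ≤ 1 → x ∈ V ε x
  -- A0
  closedBall_subset_U : ∀ x, closedBall x rA ⊆ U x
  δ_homeo : ∀ ε x, ν ε ≤ 1 →
    ContinuousOn (δ ε x) (U x) ∧ BijOn (δ ε x) (U x) (V ε x) ∧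
      ContinuousOn (δ ε⁻¹ x) (V ε x)
  ball_subset_image : ∀ ε x, ν ε < 1 → ball x (ν ε) ⊆ δ ε x '' ball x rA
  image_subset_V : ∀ ε x, ν ε < 1 → δ ε x '' ball x rA ⊆ V ε x
  V_subset_U : ∀ ε x, ν ε ≤ 1 → V ε x ⊆ U x
  W_nhds : ∀ ε x, 1 < ν ε → W ε x ∈ nhds x
  V_subset_W : ∀ ε x, ν ε < 1 → V ε x ⊆ W ε⁻¹ x
  δ_injOn_W : ∀ ε x, 1 < ν ε → InjOn (δ ε x) (W ε x)
  δ_image_W : ∀ ε x, 1 < ν ε → δ ε x '' W ε x ⊆ ball x rB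
  δ_inv : ∀ ε x, ν ε ≤ 1 → ∀ u ∈ U x, δ ε⁻¹ x (δ ε x u) = u
  domain_tech : ∀ K : Set X, IsCompact K → ∃ R > 0, ∃ ε₀ ∈ Ioo (0:ℝ) 1,
    ∀ x ∈ K, ∀ u ∈ closedBall x R, ∀ v ∈ closedBall x R, ∀ ε : Γ, ν ε < ε₀ →
      δ ε x v ∈ W ε⁻¹ (δ ε x u)
  -- A1
  δ_base : ∀ ε x, ν ε ≤ 1 → δ ε x x = x
  δ_one : ∀ x y, δ 1 x y = y
  δ_cont : ContinuousOn (fun p : Γ × X × X => δ p.1 p.2.1 p.2.2)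
    {p : Γ × X × X | ν p.1 ≤ 1 ∧ p.2.2 ∈ U p.2.1}
  δ_tendsto_zero : ∀ x : X, ∀ y ∈ U x, ∀ η > 0, ∃ θ > 0, ∀ ε : Γ, ν ε < θ →
    dist (δ ε x y) x < η
  -- A2
  δ_comp : ∀ ε μ x, ν ε ≤ 1 → ν μ ≤ 1 → ∀ u ∈ closedBall x rA,
    δ ε x (δ μ x u) = δ (ε * μ) x u
  -- A3 : the limit distances `d^x`
  dx : X → X → X → ℝ
  dx_lim : ∀ K : Set X, IsCompact K → ∀ η > 0, ∃ θ > 0, ∀ ε : Γ, ν ε < θ →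
    ∀ x ∈ K, ∀ u ∈ closedBall x rA, ∀ v ∈ closedBall x rA,
      |(1 / ν ε) * dist (δ ε x u) (δ ε x v) - dx x u v| < η
  dx_nondegenerate : ∀ x : X, ∀ u ∈ closedBall x rA, ∀ v ∈ closedBall x rA,
    dx x u v = 0 → u = v

namespace DilatationStructure

variable {Γ : Type*} [CommGroup Γ] [TopologicalSpace Γ] {X : Type*} [MetricSpace X]

/-- the difference operation `Δ_ε^x(u,v) = δ_{ε⁻¹}^{δ_ε^x u} δ_ε^x v` -/
def difOp (D : DilatationStructure Γ X) (ε : Γ) (x u v : X) : X :=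
  D.δ ε⁻¹ (D.δ ε x u) (D.δ ε x v)

/-- the sum operation `Σ_ε^x(u,v) = δ_{ε⁻¹}^x δ_ε^{δ_ε^x u} v` -/
def sumOp (D : DilatationStructure Γ X) (ε : Γ) (x u v : X) : X :=
  D.δ ε⁻¹ x (D.δ ε (D.δ ε x u) v)

/-- the inverse operation `inv_ε^x(u) = δ_{ε⁻¹}^{δ_ε^x u} x` -/
def invOp (D : DilatationStructure Γ X) (ε : Γ) (x u : X) : X :=
  D.δ ε⁻¹ (D.δ ε x u) x

/-- A dilatation structure is linear if `δ_ε^x δ_μ^y z = δ_μ^{δ_ε^x y} δ_ε^x z`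
for sufficiently closed `x, y, z`. -/
def IsLinear (D : DilatationStructure Γ X) : Prop :=
  ∀ K : Set X, IsCompact K → ∃ C > 0, ∀ ε μ : Γ, D.ν ε ≤ 1 → D.ν μ ≤ 1 →
    ∀ x ∈ K, ∀ y ∈ K, ∀ z ∈ K,
      dist x y ≤ C → dist x z ≤ C → dist y z ≤ C →
        D.δ ε x (D.δ μ y z) = D.δ μ (D.δ ε x y) (D.δ ε x z)

/-- A transformation `A : X → X` is linear (w.r.t. a dilatation structure) if it is
Lipschitz and commutes with dilatations. -/
def IsLinearTransform (D : DilatationStructure Γ X) (A : X → X) : Prop :=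
  (∃ C : NNReal, LipschitzWith C A) ∧
  ∀ x : X, ∀ u ∈ D.U x, ∀ ε : Γ, D.ν ε < 1 → A u ∈ D.U (A x) →
    A (D.δ ε x u) = D.δ ε (A x) (A u)

end DilatationStructure

/-- A strong dilatation structure: a dilatation structure satisfying in addition
axiom A4, the uniform convergence of `Δ_ε^x(u,v)` (hence also of `Σ_ε^x(u,v)` and
`inv_ε^x(u)`) as `ε → 0`. -/
structure StrongDilatationStructure (Γ : Type*) [CommGroup Γ] [TopologicalSpace Γ]
    (X : Type*) [MetricSpace X] extends DilatationStructure Γ X where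
  /-- `Δ^x(u,v)` -/
  difLim : X → X → X → X
  /-- `Σ^x(u,v)` -/
  sumLim : X → X → X → X
  /-- `inv^x(u)` -/
  invLim : X → X → X
  dif_conv : ∀ K : Set X, IsCompact K → ∃ R > 0, ∀ η > 0, ∃ θ > 0, ∀ ε : Γ, ν ε < θ →
    ∀ x ∈ K, ∀ u ∈ closedBall x R, ∀ v ∈ closedBall x R,
      dist (δ ε⁻¹ (δ ε x u) (δ ε x v)) (difLim x u v) < η
  sum_conv : ∀ K : Set X, IsCompact K → ∃ R > 0, ∀ η > 0, ∃ θ > 0, ∀ ε : Γ, ν ε < θ →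
    ∀ x ∈ K, ∀ u ∈ closedBall x R, ∀ v ∈ closedBall x R,
      dist (δ ε⁻¹ x (δ ε (δ ε x u) v)) (sumLim x u v) < η
  inv_conv : ∀ K : Set X, IsCompact K → ∃ R > 0, ∀ η > 0, ∃ θ > 0, ∀ ε : Γ, ν ε < θ →
    ∀ x ∈ K, ∀ u ∈ closedBall x R,
      dist (δ ε⁻¹ (δ ε x u) x) (invLim x u) < η

variable {Γ : Type*} [CommGroup Γ] [TopologicalSpace Γ] {X : Type*} [MetricSpace X]

namespace DilatationStructure

variable {Γ : Type*} [CommGroup Γ] [TopologicalSpace Γ] {X : Type*} [MetricSpace X]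
variable (D : DilatationStructure Γ X)

lemma rA_pos : 0 < D.rA :=
  lt_trans one_pos (lt_of_lt_of_le D.one_lt_rB D.rB_le_rA)

lemma one_lt_rA : 1 < D.rA := lt_of_lt_of_le D.one_lt_rB D.rB_le_rA

lemma ν_one : D.ν 1 = 1 := by
  have h := D.ν_mul 1 1
  rw [mul_one] at h
  have := D.ν_pos 1
  nlinarith

lemma ν_pow (g : Γ) (k : ℕ) : D.ν (g ^ k) = (D.ν g) ^ k := by
  induction k with
  | zero => simpa using D.ν_one
  | succ n ih => rw [pow_succ, pow_succ, D.ν_mul, ih]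

/-- We can find a value of `ν` in any interval `(a, β)` with `a < ν g * β`. -/
lemma exists_nu_between (g : Γ) (hg : D.ν g < 1) (a β : ℝ) (ha : 0 ≤ a) (hβ1 : β ≤ 1)
    (h : a < D.ν g * β) : ∃ μ : Γ, a < D.ν μ ∧ D.ν μ < β := by
  set q := D.ν g with hq
  have hq0 : 0 < q := D.ν_pos g
  have hβ0 : 0 < β := by nlinarith
  have hex : ∃ n : ℕ, q ^ n < β := exists_pow_lt_of_lt_one hβ0 hg
  classical
  set k := Nat.find hex with hk
  have hklt : q ^ k < β := Nat.find_spec hex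
  have hkne : k ≠ 0 := by
    intro h0
    rw [h0, pow_zero] at hklt
    linarith
  obtain ⟨k', hkk⟩ := Nat.exists_eq_succ_of_ne_zero hkne
  have hmin : ¬ (q ^ k' < β) := by
    rw [hk] at hkk
    exact Nat.find_min hex (by omega)
  push_neg at hmin
  refine ⟨g ^ (k' + 1), ?_, ?_⟩
  · rw [D.ν_pow, ← hq]
    calc a < q * β := h
    _ ≤ q * q ^ k' := by nlinarith
    _ = q ^ (k' + 1) := by ring
  · rw [D.ν_pow, ← hq, ← Nat.succ_eq_add_one, ← hkk]; exact hklt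

end DilatationStructure

namespace DilatationStructure

variable {Γ : Type*} [CommGroup Γ] [TopologicalSpace Γ] {X : Type*} [MetricSpace X]
variable (D : DilatationStructure Γ X)

/-- Main technical lemma: on a compact set, for `ν μ` below a threshold,
(1) dilatations move `ν μ`-close points by at most `3 ν ε ν μ`, and
(2) points `ν ε ν μ`-close to the base have a small preimage under `δ ε`. -/
lemma main_tech (Kc : Set X) (hKc : IsCompact Kc) :
    ∃ θ > (0:ℝ),
      (∀ z ∈ Kc, ∀ ε μ : Γ, D.ν ε ≤ 1 → D.ν μ < θ → D.ν μ < 1 →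
        ∀ w : X, dist w z < D.ν μ → dist (D.δ ε z w) z < 3 * (D.ν ε * D.ν μ)) ∧
      (∀ z ∈ Kc, ∀ ε μ : Γ, D.ν ε < 1 → D.ν μ < θ → D.ν μ < 1 →
        ∀ P : X, dist P z < D.ν ε * D.ν μ →
          ∃ s : X, D.δ ε z s = P ∧ s ∈ D.U z ∧ dist s z < 3 * D.ν μ ∧
            D.δ ε⁻¹ z P = s) := by
  obtain ⟨θ, hθ0, hdx⟩ := D.dx_lim Kc hKc 1 one_pos
  have hzball : ∀ z : X, z ∈ closedBall z D.rA := fun z =>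
    mem_closedBall_self D.rA_pos.le
  refine ⟨θ, hθ0, ?_, ?_⟩
  · intro z hz ε μ hε1 hμθ hμ1 w hw
    have hμ0 := D.ν_pos μ
    have hε0 := D.ν_pos ε
    -- decompose w = δ μ z w̄
    obtain ⟨wb, hwb, hwbδ⟩ := D.ball_subset_image μ z hμ1 (mem_ball.2 hw)
    have hwbc : wb ∈ closedBall z D.rA := ball_subset_closedBall hwb
    -- dx bound
    have h1 := hdx μ hμθ z hz wb hwbc z (hzball z)
    rw [D.δ_base μ z hμ1.le, hwbδ] at h1
    have hdx2 : D.dx z wb z < 2 := by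
      have := (abs_lt.1 h1).1
      have h2 : (1 / D.ν μ) * dist w z < 1 := by
        rw [div_mul_eq_mul_div, one_mul, div_lt_one hμ0]; exact hw
      linarith
    -- composition
    have hcomp : D.δ ε z w = D.δ (ε * μ) z wb := by
      rw [← hwbδ, D.δ_comp ε μ z hε1 hμ1.le wb hwbc]
    have hνεμ : D.ν (ε * μ) = D.ν ε * D.ν μ := D.ν_mul ε μ
    have hεμθ : D.ν (ε * μ) < θ := by
      rw [hνεμ]
      calc D.ν ε * D.ν μ ≤ 1 * D.ν μ := by nlinarith
      _ = D.ν μ := one_mul _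
      _ < θ := hμθ
    have h3 := hdx (ε * μ) hεμθ z hz wb hwbc z (hzball z)
    rw [D.δ_base (ε * μ) z (by rw [hνεμ]; nlinarith), ← hcomp] at h3
    have h4 := (abs_lt.1 h3).2
    have hp : 0 < D.ν ε * D.ν μ := mul_pos hε0 hμ0
    rw [hνεμ] at h4
    have h5 : (1 / (D.ν ε * D.ν μ)) * dist (D.δ ε z w) z < D.dx z wb z + 1 := by
      linarith
    rw [div_mul_eq_mul_div, one_mul, div_lt_iff₀ hp] at h5
    calc dist (D.δ ε z w) z < (D.dx z wb z + 1) * (D.ν ε * D.ν μ) := h5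
    _ ≤ 3 * (D.ν ε * D.ν μ) := by nlinarith
  · intro z hz ε μ hε1 hμθ hμ1 P hP
    have hμ0 := D.ν_pos μ
    have hε0 := D.ν_pos ε
    have hνεμ : D.ν (ε * μ) = D.ν ε * D.ν μ := D.ν_mul ε μ
    have hεμ1 : D.ν (ε * μ) < 1 := by rw [hνεμ]; nlinarith
    obtain ⟨w, hw, hwδ⟩ := D.ball_subset_image (ε * μ) z hεμ1
      (mem_ball.2 (by rw [hνεμ]; exact hP))
    have hwc : w ∈ closedBall z D.rA := ball_subset_closedBall hw
    set s := D.δ μ z w with hs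
    have hδs : D.δ ε z s = P := by
      rw [hs, D.δ_comp ε μ z hε1.le hμ1.le w hwc, hwδ]
    have hsU : s ∈ D.U z :=
      D.V_subset_U μ z hμ1.le (D.image_subset_V μ z hμ1 ⟨w, hw, rfl⟩)
    -- dx bound on w
    have hεμθ : D.ν (ε * μ) < θ := by
      rw [hνεμ]
      calc D.ν ε * D.ν μ ≤ 1 * D.ν μ := by nlinarith
      _ = D.ν μ := one_mul _
      _ < θ := hμθ
    have h1 := hdx (ε * μ) hεμθ z hz w hwc z (hzball z)
    rw [D.δ_base (ε * μ) z hεμ1.le, hwδ] at h1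
    have hdx2 : D.dx z w z < 2 := by
      have := (abs_lt.1 h1).1
      have hp : 0 < D.ν ε * D.ν μ := mul_pos hε0 hμ0
      have h2 : (1 / D.ν (ε * μ)) * dist P z < 1 := by
        rw [hνεμ, div_mul_eq_mul_div, one_mul, div_lt_one hp]; exact hP
      linarith
    have h3 := hdx μ hμθ z hz w hwc z (hzball z)
    rw [D.δ_base μ z hμ1.le] at h3
    have h4 := (abs_lt.1 h3).2
    have h5 : (1 / D.ν μ) * dist (D.δ μ z w) z < D.dx z w z + 1 := by linarith
    rw [div_mul_eq_mul_div, one_mul, div_lt_iff₀ hμ0] at h5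
    have hsz : dist s z < 3 * D.ν μ := by
      calc dist s z < (D.dx z w z + 1) * D.ν μ := h5
      _ ≤ 3 * D.ν μ := by nlinarith
    refine ⟨s, hδs, hsU, hsz, ?_⟩
    rw [← hδs, D.δ_inv ε z hε1.le s hsU]

end DilatationStructure

namespace DilatationStructure

variable {Γ : Type*} [CommGroup Γ] [TopologicalSpace Γ] {X : Type*} [MetricSpace X]
variable (D : DilatationStructure Γ X)

/-- A linear transformation commutes with inverse dilatations on points with
a good preimage. -/
lemma comm_inv {A : X → X} (hA : D.IsLinearTransform A) (z P s : X) (ε : Γ)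
    (hε : D.ν ε < 1) (hδ : D.δ ε z s = P) (hs : s ∈ D.U z) (hAs : A s ∈ D.U (A z)) :
    A (D.δ ε⁻¹ z P) = D.δ ε⁻¹ (A z) (A P) := by
  have h1 : D.δ ε⁻¹ z P = s := by rw [← hδ, D.δ_inv ε z hε.le s hs]
  have h2 : A P = D.δ ε (A z) (A s) := by rw [← hδ, hA.2 z s hs ε hε hAs]
  rw [h1, h2, D.δ_inv ε (A z) hε.le (A s) hAs]

/-- Core identity for the sum operation. -/
lemma sum_comm {A : X → X} (hA : D.IsLinearTransform A) (ε : Γ) (x u v : X)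
    (hε : D.ν ε < 1) (hu : u ∈ D.U x) (hAu : A u ∈ D.U (A x))
    (hv : v ∈ D.U (D.δ ε x u)) (hAv : A v ∈ D.U (A (D.δ ε x u)))
    (s : X) (hδs : D.δ ε x s = D.δ ε (D.δ ε x u) v) (hs : s ∈ D.U x)
    (hAs : A s ∈ D.U (A x)) :
    A (D.sumOp ε x u v) = D.sumOp ε (A x) (A u) (A v) := by
  have hAy : D.δ ε (A x) (A u) = A (D.δ ε x u) := (hA.2 x u hu ε hε hAu).symm
  have hAT : A (D.δ ε (D.δ ε x u) v) = D.δ ε (A (D.δ ε x u)) (A v) :=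
    hA.2 (D.δ ε x u) v hv ε hε hAv
  unfold sumOp
  rw [hAy, ← hAT]
  exact D.comm_inv hA x (D.δ ε (D.δ ε x u) v) s ε hε hδs hs hAs

/-- Core identity for the inverse operation. -/
lemma inv_comm {A : X → X} (hA : D.IsLinearTransform A) (ε : Γ) (x u : X)
    (hε : D.ν ε < 1) (hu : u ∈ D.U x) (hAu : A u ∈ D.U (A x))
    (p : X) (hδp : D.δ ε (D.δ ε x u) p = x) (hp : p ∈ D.U (D.δ ε x u))
    (hAp : A p ∈ D.U (A (D.δ ε x u))) :
    A (D.invOp ε x u) = D.invOp ε (A x) (A u) := by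
  have hAy : D.δ ε (A x) (A u) = A (D.δ ε x u) := (hA.2 x u hu ε hε hAu).symm
  unfold invOp
  rw [hAy]
  exact D.comm_inv hA (D.δ ε x u) x p ε hε hδp hp hAp

end DilatationStructure

/-- A union of compacts shrinking to a point, together with the point, is compact. -/
lemma isCompact_insert_iUnion_of_shrinking {X : Type*} [MetricSpace X]
    (a : X) (s : ℕ → Set X) (hc : ∀ n, IsCompact (s n)) (r : ℕ → ℝ)
    (hr : Filter.Tendsto r Filter.atTop (nhds 0))
    (hs : ∀ n, s n ⊆ closedBall a (r n)) :
    IsCompact (insert a (⋃ n, s n)) := by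
  classical
  rw [isCompact_iff_finite_subcover]
  intro ι U hU hcov
  have ha : a ∈ insert a (⋃ n, s n) := mem_insert _ _
  obtain ⟨i₀, hi₀⟩ := mem_iUnion.1 (hcov ha)
  obtain ⟨ρ, hρ0, hρ⟩ := Metric.isOpen_iff.1 (hU i₀) a hi₀
  obtain ⟨N, hN⟩ := (Metric.tendsto_atTop.1 hr (ρ/2) (by linarith)).imp
    (fun N h => h)
  -- each s n for n < N has a finite subcover
  have hfin : ∀ n, ∃ t : Finset ι, s n ⊆ ⋃ i ∈ t, U i := by
    intro n
    exact (hc n).elim_finite_subcover U hU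
      (fun z hz => hcov (mem_insert_of_mem _ (mem_iUnion.2 ⟨n, hz⟩)))
  choose t ht using hfin
  refine ⟨insert i₀ ((Finset.range N).biUnion t), ?_⟩
  intro z hz
  rcases hz with rfl | hz
  · exact mem_iUnion.2 ⟨i₀, mem_iUnion.2 ⟨Finset.mem_insert_self _ _, hρ (mem_ball_self hρ0)⟩⟩
  obtain ⟨n, hn⟩ := mem_iUnion.1 hz
  by_cases hnN : n < N
  · obtain ⟨i, hi, hzi⟩ := mem_iUnion₂.1 (ht n hn)
    exact mem_iUnion.2 ⟨i, mem_iUnion.2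
      ⟨Finset.mem_insert_of_mem (Finset.mem_biUnion.2 ⟨n, Finset.mem_range.2 hnN, hi⟩), hzi⟩⟩
  · push_neg at hnN
    have h1 : dist z a ≤ r n := (hs n) hn
    have h2 := hN n hnN
    rw [Real.dist_eq] at h2
    have : dist z a < ρ := by
      have : |r n - 0| < ρ/2 := h2
      rw [sub_zero] at this
      have := le_of_abs_le (le_of_lt this) |>.trans_lt (by linarith : ρ/2 < ρ)
      linarith [abs_nonneg (r n), le_abs_self (r n)]
    exact mem_iUnion.2 ⟨i₀, mem_iUnion.2 ⟨Finset.mem_insert_self _ _, hρ this⟩⟩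

namespace DilatationStructure

variable {Γ : Type*} [CommGroup Γ] [TopologicalSpace Γ] {X : Type*} [MetricSpace X]

lemma part_a (D : DilatationStructure Γ X) (A : X → X) (hA : D.IsLinearTransform A)
    (K : Set X) (hK : IsCompact K) :
    ∃ C > (0:ℝ), ∀ ε : Γ, D.ν ε < 1 →
      ∀ x ∈ K, ∀ u ∈ K, ∀ v ∈ K,
        dist x u ≤ C → dist x v ≤ C → dist u v ≤ C → u ∈ D.U x → v ∈ D.U x →
          A (D.sumOp ε x u v) = D.sumOp ε (A x) (A u) (A v) := by
  classical
  obtain ⟨L₀, hLip⟩ := hA.1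
  obtain ⟨L, hL1, hLd⟩ : ∃ L : ℝ, 1 ≤ L ∧ ∀ a b : X, dist (A a) (A b) ≤ L * dist a b := by
    refine ⟨(L₀ : ℝ) + 1, by have := L₀.coe_nonneg; linarith, fun a b => ?_⟩
    have h := hLip.dist_le_mul a b
    have := dist_nonneg (x := a) (y := b)
    nlinarith
  have hL0 : 0 < L := by linarith
  obtain ⟨g, hg⟩ := D.ν_inf 1 one_pos
  have hg0 : 0 < D.ν g := D.ν_pos g
  have hrA0 := D.rA_pos
  have hrA1 := D.one_lt_rA
  obtain ⟨θK, hθK0, hKLK, -⟩ := D.main_tech K hK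
  obtain ⟨b, hbeq⟩ : ∃ b : ℕ → ℝ, b = fun n : ℕ => min (min θK 1) (1/((n:ℝ)+1)) := ⟨_, rfl⟩
  have hb0 : ∀ n, 0 < b n := by
    intro n; rw [hbeq]
    exact lt_min (lt_min hθK0 one_pos) (by positivity)
  have hb1 : ∀ n, b n ≤ 1 := by
    intro n; rw [hbeq]; exact (min_le_left _ _).trans (min_le_right _ _)
  have hbθ : ∀ n, b n ≤ θK := by
    intro n; rw [hbeq]; exact (min_le_left _ _).trans (min_le_left _ _)
  have hbn : ∀ n : ℕ, b n ≤ 1/((n:ℝ)+1) := by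
    intro n; rw [hbeq]; exact min_le_right _ _
  obtain ⟨C, hCeq⟩ : ∃ C : ℕ → ℝ, C = fun n : ℕ => min (D.rA/(4*L)) (D.ν g * b n / 2) :=
    ⟨_, rfl⟩
  have hC0 : ∀ n, 0 < C n := by
    intro n; rw [hCeq]
    exact lt_min (by positivity) (by have := hb0 n; positivity)
  have hCle1 : ∀ n, C n ≤ D.rA/(4*L) := by intro n; rw [hCeq]; exact min_le_left _ _
  have hCle2 : ∀ n, C n ≤ D.ν g * b n / 2 := by intro n; rw [hCeq]; exact min_le_right _ _
  by_contra hcon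
  push_neg at hcon
  have hinst := fun n => hcon (C n) (hC0 n)
  choose ε hε x hxK u huK v hvK hdxu hdxv hduv hUu hUv hne using hinst
  -- choose μ₁ n
  have hμ₁ex : ∀ n, ∃ μ : Γ, dist (u n) (x n) < D.ν μ ∧ D.ν μ < b n := by
    intro n
    apply D.exists_nu_between g hg _ _ dist_nonneg (hb1 n)
    calc dist (u n) (x n) = dist (x n) (u n) := dist_comm _ _
    _ ≤ C n := hdxu n
    _ ≤ D.ν g * b n / 2 := hCle2 n
    _ < D.ν g * b n := by have := hb0 n; nlinarith
  choose μ₁ hμ₁d hμ₁b using hμ₁ex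
  obtain ⟨y, hyeq⟩ : ∃ y : ℕ → X, y = fun n : ℕ => D.δ (ε n) (x n) (u n) := ⟨_, rfl⟩
  have hyx : ∀ n, dist (y n) (x n) < 3 * (D.ν (ε n) * D.ν (μ₁ n)) := by
    intro n; rw [hyeq]
    exact hKLK (x n) (hxK n) (ε n) (μ₁ n) (hε n).le
      (lt_of_lt_of_le (hμ₁b n) (hbθ n)) (lt_of_lt_of_le (hμ₁b n) (hb1 n))
      (u n) (hμ₁d n)
  have hyx3 : ∀ n, dist (y n) (x n) < 3 * D.ν (μ₁ n) := by
    intro n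
    have h := hyx n
    have h1 := D.ν_pos (ε n)
    have h2 := D.ν_pos (μ₁ n)
    have h3 := (hε n).le
    nlinarith
  -- subsequence converging in K
  obtain ⟨xs, hxsK, φ, hφ, hφt⟩ := hK.tendsto_subseq hxK
  have hφn : ∀ n, n ≤ φ n := fun n => hφ.le_apply
  have hmono : ∀ n : ℕ, 1/((φ n : ℝ)+1) ≤ 1/((n:ℝ)+1) := by
    intro n
    apply one_div_le_one_div_of_le
    · positivity
    · exact_mod_cast Nat.succ_le_succ (hφn n)
  have hyst : Filter.Tendsto (fun n => y (φ n)) Filter.atTop (nhds xs) := by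
    rw [tendsto_iff_dist_tendsto_zero]
    apply squeeze_zero (fun n => dist_nonneg)
      (g := fun n : ℕ => 3 * (1/((n:ℝ)+1)) + dist (x (φ n)) xs)
    · intro n
      have h1 : dist (y (φ n)) xs ≤ dist (y (φ n)) (x (φ n)) + dist (x (φ n)) xs :=
        dist_triangle _ _ _
      have h2 : dist (y (φ n)) (x (φ n)) ≤ 3 * (1/((n:ℝ)+1)) := by
        have h3 := (hyx3 (φ n)).le
        have h4 : D.ν (μ₁ (φ n)) ≤ b (φ n) := (hμ₁b (φ n)).le
        have h5 := hbn (φ n)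
        have h6 := hmono n
        linarith
      linarith
    · have h1 : Filter.Tendsto (fun n : ℕ => 3 * (1/((n:ℝ)+1))) Filter.atTop (nhds 0) := by
        have := tendsto_one_div_add_atTop_nhds_zero_nat (𝕜 := ℝ)
        simpa using this.const_mul (3:ℝ)
      have h2 : Filter.Tendsto (fun n => dist (x (φ n)) xs) Filter.atTop (nhds 0) :=
        tendsto_iff_dist_tendsto_zero.1 hφt
      simpa using h1.add h2
  obtain ⟨Kstar, hKseq⟩ : ∃ S : Set X, S = K ∪ insert xs (Set.range fun n => y (φ n)) :=
    ⟨_, rfl⟩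
  have hKstar : IsCompact Kstar := by
    rw [hKseq]; exact hK.union hyst.isCompact_insert_range
  obtain ⟨θs, hθs0, hKLs, hPREs⟩ := D.main_tech Kstar hKstar
  -- fixed small μ̂
  have hrAL : 0 < D.rA / (3*L) := by positivity
  obtain ⟨μh, hμh0, hμhlt⟩ := D.exists_nu_between g hg 0
    (min (min θs 1) (D.rA/(3*L))) le_rfl
    ((min_le_left _ _).trans (min_le_right _ _))
    (by positivity)
  have hσθ : D.ν μh < θs := lt_of_lt_of_le hμhlt ((min_le_left _ _).trans (min_le_left _ _))
  have hσ1 : D.ν μh < 1 := lt_of_lt_of_le hμhlt ((min_le_left _ _).trans (min_le_right _ _))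
  have hσrA : D.ν μh < D.rA/(3*L) := lt_of_lt_of_le hμhlt (min_le_right _ _)
  have hσ0 : 0 < D.ν μh := D.ν_pos μh
  obtain ⟨βt, hβteq⟩ : ∃ β : ℝ, β = min (min θs 1) (min (D.ν μh/7) (D.rA/L)) := ⟨_, rfl⟩
  have hβt0 : 0 < βt := by
    rw [hβteq]
    exact lt_min (lt_min hθs0 one_pos) (lt_min (by positivity) (by positivity))
  have hβt1 : βt ≤ 1 := by
    rw [hβteq]; exact (min_le_left _ _).trans (min_le_right _ _)
  have hβtθ : βt ≤ θs := by
    rw [hβteq]; exact (min_le_left _ _).trans (min_le_left _ _)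
  have hβt7 : βt ≤ D.ν μh/7 := by
    rw [hβteq]; exact (min_le_right _ _).trans (min_le_left _ _)
  have hβtrA : βt ≤ D.rA/L := by
    rw [hβteq]; exact (min_le_right _ _).trans (min_le_right _ _)
  -- choose N
  obtain ⟨N, hN⟩ := exists_nat_one_div_lt
    (show (0:ℝ) < min (4 * D.ν μh/21) (D.ν g * βt / 4) by
      exact lt_min (by positivity) (by positivity))
  have hbm : b (φ N) < min (4 * D.ν μh/21) (D.ν g * βt / 4) :=
    lt_of_le_of_lt ((hbn (φ N)).trans (hmono N)) hN
  have hbmσ : b (φ N) < 4 * D.ν μh/21 := lt_of_lt_of_le hbm (min_le_left _ _)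
  have hbmβ : b (φ N) < D.ν g * βt / 4 := lt_of_lt_of_le hbm (min_le_right _ _)
  -- distance from v to y
  have hdvy : dist (v (φ N)) (y (φ N)) < C (φ N) + 3 * D.ν (μ₁ (φ N)) := by
    have h1 : dist (v (φ N)) (y (φ N)) ≤
        dist (v (φ N)) (x (φ N)) + dist (x (φ N)) (y (φ N)) := dist_triangle _ _ _
    have h2 : dist (v (φ N)) (x (φ N)) ≤ C (φ N) := by rw [dist_comm]; exact hdxv (φ N)
    have h3 : dist (x (φ N)) (y (φ N)) < 3 * D.ν (μ₁ (φ N)) := by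
      rw [dist_comm]; exact hyx3 (φ N)
    linarith
  have hCb : C (φ N) ≤ b (φ N) := by
    have h1 := hCle2 (φ N)
    have h2 := hb0 (φ N)
    nlinarith
  have hdvy4 : dist (v (φ N)) (y (φ N)) < D.ν g * βt := by
    have h4 := hμ₁b (φ N)
    calc dist (v (φ N)) (y (φ N)) < C (φ N) + 3 * D.ν (μ₁ (φ N)) := hdvy
    _ ≤ b (φ N) + 3 * b (φ N) := by linarith
    _ = 4 * b (φ N) := by ring
    _ < D.ν g * βt := by linarith
  obtain ⟨μt, hμt_gt, hμt_lt⟩ :=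
    D.exists_nu_between g hg (dist (v (φ N)) (y (φ N))) βt dist_nonneg hβt1 hdvy4
  have hym_mem : y (φ N) ∈ Kstar := by
    rw [hKseq]; right; exact mem_insert_of_mem _ ⟨N, rfl⟩
  have hxm_mem : x (φ N) ∈ Kstar := by rw [hKseq]; exact Or.inl (hxK (φ N))
  -- the point T and its estimates
  have hT : dist (D.δ (ε (φ N)) (y (φ N)) (v (φ N))) (y (φ N)) <
      3 * (D.ν (ε (φ N)) * D.ν μt) :=
    hKLs (y (φ N)) hym_mem (ε (φ N)) μt (hε (φ N)).le (lt_of_lt_of_le hμt_lt hβtθ)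
      (lt_of_lt_of_le hμt_lt hβt1) (v (φ N)) hμt_gt
  have hTx : dist (D.δ (ε (φ N)) (y (φ N)) (v (φ N))) (x (φ N)) <
      D.ν (ε (φ N)) * D.ν μh := by
    have h1 : dist (D.δ (ε (φ N)) (y (φ N)) (v (φ N))) (x (φ N)) ≤
        dist (D.δ (ε (φ N)) (y (φ N)) (v (φ N))) (y (φ N)) + dist (y (φ N)) (x (φ N)) :=
      dist_triangle _ _ _
    have h2 := hyx (φ N)
    have hνε0 := D.ν_pos (ε (φ N))
    have h3 : D.ν μt < D.ν μh/7 := lt_of_lt_of_le hμt_lt hβt7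
    have h4 : D.ν (μ₁ (φ N)) < 4 * D.ν μh/21 := (hμ₁b (φ N)).trans hbmσ
    have h5 : 3 * D.ν μt + 3 * D.ν (μ₁ (φ N)) < D.ν μh := by linarith
    calc dist (D.δ (ε (φ N)) (y (φ N)) (v (φ N))) (x (φ N))
        < 3 * (D.ν (ε (φ N)) * D.ν μt) + 3 * (D.ν (ε (φ N)) * D.ν (μ₁ (φ N))) := by
          linarith
    _ = D.ν (ε (φ N)) * (3 * D.ν μt + 3 * D.ν (μ₁ (φ N))) := by ring
    _ < D.ν (ε (φ N)) * D.ν μh := mul_lt_mul_of_pos_left h5 hνε0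
  obtain ⟨s₀, hδs₀, hs₀U, hs₀d, -⟩ := hPREs (x (φ N)) hxm_mem (ε (φ N)) μh
    (hε (φ N)) hσθ hσ1 (D.δ (ε (φ N)) (y (φ N)) (v (φ N))) hTx
  -- memberships
  have hAu : A (u (φ N)) ∈ D.U (A (x (φ N))) := by
    apply D.closedBall_subset_U
    rw [mem_closedBall]
    have h1 : dist (A (u (φ N))) (A (x (φ N))) ≤ L * dist (u (φ N)) (x (φ N)) := hLd _ _
    have h2 : dist (u (φ N)) (x (φ N)) ≤ C (φ N) := by rw [dist_comm]; exact hdxu (φ N)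
    have h3 := hCle1 (φ N)
    have h4 : L * dist (u (φ N)) (x (φ N)) ≤ L * (D.rA/(4*L)) :=
      mul_le_mul_of_nonneg_left (h2.trans h3) hL0.le
    have h5 : L * (D.rA/(4*L)) = D.rA/4 := by field_simp
    linarith
  have hvy1 : dist (v (φ N)) (y (φ N)) < 1 := hμt_gt.trans (lt_of_lt_of_le hμt_lt hβt1)
  have hvU : v (φ N) ∈ D.U (y (φ N)) := by
    apply D.closedBall_subset_U
    rw [mem_closedBall]
    linarith
  have hAv : A (v (φ N)) ∈ D.U (A (y (φ N))) := by
    apply D.closedBall_subset_U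
    rw [mem_closedBall]
    have h1 : dist (A (v (φ N))) (A (y (φ N))) ≤ L * dist (v (φ N)) (y (φ N)) := hLd _ _
    have h2 : dist (v (φ N)) (y (φ N)) ≤ D.rA / L :=
      (hμt_gt.trans (lt_of_lt_of_le hμt_lt hβtrA)).le
    have h3 : L * (D.rA / L) = D.rA := by field_simp
    have h4 : L * dist (v (φ N)) (y (φ N)) ≤ L * (D.rA / L) :=
      mul_le_mul_of_nonneg_left h2 hL0.le
    linarith
  have hAs₀ : A s₀ ∈ D.U (A (x (φ N))) := by
    apply D.closedBall_subset_U
    rw [mem_closedBall]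
    have h1 : dist (A s₀) (A (x (φ N))) ≤ L * dist s₀ (x (φ N)) := hLd _ _
    have h2 : dist s₀ (x (φ N)) ≤ 3 * D.ν μh := hs₀d.le
    have h4 : L * (3 * (D.rA / (3*L))) = D.rA := by field_simp
    have h5 : L * dist s₀ (x (φ N)) ≤ L * (3 * (D.rA / (3*L))) :=
      mul_le_mul_of_nonneg_left (by linarith) hL0.le
    linarith
  rw [hyeq] at hδs₀ hvU hAv
  exact hne (φ N) (D.sum_comm hA (ε (φ N)) (x (φ N)) (u (φ N)) (v (φ N)) (hε (φ N))
    (hUu (φ N)) hAu hvU hAv s₀ hδs₀ hs₀U hAs₀)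

end DilatationStructure

namespace StrongDilatationStructure

variable {Γ : Type*} [CommGroup Γ] [TopologicalSpace Γ] {X : Type*} [MetricSpace X]

lemma part_b (D : StrongDilatationStructure Γ X) (A : X → X)
    (hA : D.toDilatationStructure.IsLinearTransform A)
    (K : Set X) (hK : IsCompact K) :
    ∃ C > (0:ℝ), ∀ x ∈ K, ∀ u ∈ K, dist x u ≤ C → u ∈ D.U x →
      A (D.invLim x u) = D.invLim (A x) (A u) := by
  classical
  obtain ⟨L₀, hLip⟩ := hA.1
  obtain ⟨L, hL1, hLd⟩ : ∃ L : ℝ, 1 ≤ L ∧ ∀ a b : X, dist (A a) (A b) ≤ L * dist a b := by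
    refine ⟨(L₀ : ℝ) + 1, by have := L₀.coe_nonneg; linarith, fun a b => ?_⟩
    have h := hLip.dist_le_mul a b
    have := dist_nonneg (x := a) (y := b)
    nlinarith
  have hL0 : 0 < L := by linarith
  obtain ⟨g, hg⟩ := D.ν_inf 1 one_pos
  have hg0 : 0 < D.ν g := D.ν_pos g
  have hrA0 := D.toDilatationStructure.rA_pos
  have hrA1 := D.toDilatationStructure.one_lt_rA
  obtain ⟨θK, hθK0, hKLK, -⟩ := D.toDilatationStructure.main_tech K hK
  obtain ⟨RK, hRK0, hconvK⟩ := D.inv_conv K hK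
  have hK' : IsCompact (A '' K) := hK.image hLip.continuous
  obtain ⟨RK', hRK'0, hconvK'⟩ := D.inv_conv (A '' K) hK'
  obtain ⟨b, hbeq⟩ : ∃ b : ℕ → ℝ, b = fun n : ℕ => min (min θK 1) (1/((n:ℝ)+1)) := ⟨_, rfl⟩
  have hb0 : ∀ n, 0 < b n := by
    intro n; rw [hbeq]
    exact lt_min (lt_min hθK0 one_pos) (by positivity)
  have hb1 : ∀ n, b n ≤ 1 := by
    intro n; rw [hbeq]; exact (min_le_left _ _).trans (min_le_right _ _)
  have hbθ : ∀ n, b n ≤ θK := by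
    intro n; rw [hbeq]; exact (min_le_left _ _).trans (min_le_left _ _)
  have hbn : ∀ n : ℕ, b n ≤ 1/((n:ℝ)+1) := by
    intro n; rw [hbeq]; exact min_le_right _ _
  obtain ⟨C, hCeq⟩ : ∃ C : ℕ → ℝ,
      C = fun n : ℕ => min (min (D.rA/(4*L)) (min RK (RK'/L))) (D.ν g * b n / 2) :=
    ⟨_, rfl⟩
  have hC0 : ∀ n, 0 < C n := by
    intro n; rw [hCeq]
    refine lt_min (lt_min (by positivity) (lt_min hRK0 (by positivity)))
      (by have := hb0 n; positivity)
  have hCrA : ∀ n, C n ≤ D.rA/(4*L) := by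
    intro n; rw [hCeq]; exact (min_le_left _ _).trans (min_le_left _ _)
  have hCRK : ∀ n, C n ≤ RK := by
    intro n; rw [hCeq]; exact (min_le_left _ _).trans ((min_le_right _ _).trans (min_le_left _ _))
  have hCRK' : ∀ n, C n ≤ RK'/L := by
    intro n; rw [hCeq]; exact (min_le_left _ _).trans ((min_le_right _ _).trans (min_le_right _ _))
  have hCb : ∀ n, C n ≤ D.ν g * b n / 2 := by
    intro n; rw [hCeq]; exact min_le_right _ _
  by_contra hcon
  push_neg at hcon
  have hinst := fun n => hcon (C n) (hC0 n)
  choose x hxK u huK hdxu hUu hne using hinst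
  -- choose μ₁ n
  have hμ₁ex : ∀ n, ∃ μ : Γ, dist (u n) (x n) < D.ν μ ∧ D.ν μ < b n := by
    intro n
    apply D.toDilatationStructure.exists_nu_between g hg _ _ dist_nonneg (hb1 n)
    calc dist (u n) (x n) = dist (x n) (u n) := dist_comm _ _
    _ ≤ C n := hdxu n
    _ ≤ D.ν g * b n / 2 := hCb n
    _ < D.ν g * b n := by have := hb0 n; nlinarith
  choose μ₁ hμ₁d hμ₁b using hμ₁ex
  -- the ε-sequence
  have hesex : ∀ k : ℕ, ∃ e : Γ, D.ν e < (D.ν g)^(k+1) :=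
    fun k => D.ν_inf _ (by positivity)
  choose es hes using hesex
  have hes1 : ∀ k, D.ν (es k) < 1 := by
    intro k
    exact (hes k).trans (pow_lt_one₀ hg0.le hg (Nat.succ_ne_zero k))
  have hes0 : Filter.Tendsto (fun k => D.ν (es k)) Filter.atTop (nhds 0) := by
    apply squeeze_zero (fun k => (D.ν_pos (es k)).le) (fun k => (hes k).le)
    have h1 := tendsto_pow_atTop_nhds_zero_of_lt_one hg0.le hg
    have h2 := h1.mul_const (D.ν g)
    simpa [pow_succ] using h2
  obtain ⟨y, hyeq⟩ : ∃ y : ℕ → ℕ → X,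
      y = fun n k : ℕ => D.δ (es k) (x n) (u n) := ⟨_, rfl⟩
  have hyx : ∀ n k, dist (y n k) (x n) < 3 * (D.ν (es k) * D.ν (μ₁ n)) := by
    intro n k; rw [hyeq]
    exact hKLK (x n) (hxK n) (es k) (μ₁ n) (hes1 k).le
      (lt_of_lt_of_le (hμ₁b n) (hbθ n)) (lt_of_lt_of_le (hμ₁b n) (hb1 n))
      (u n) (hμ₁d n)
  have hyxb : ∀ n k, dist (y n k) (x n) ≤ 3 * D.ν (μ₁ n) := by
    intro n k
    have h := (hyx n k).le
    have h1 := D.ν_pos (es k)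
    have h2 := D.ν_pos (μ₁ n)
    have h3 := (hes1 k).le
    nlinarith
  have hytend : ∀ n, Filter.Tendsto (fun k => y n k) Filter.atTop (nhds (x n)) := by
    intro n
    rw [tendsto_iff_dist_tendsto_zero]
    apply squeeze_zero (fun k => dist_nonneg)
      (g := fun k : ℕ => 3 * D.ν (es k))
    · intro k
      have h := (hyx n k).le
      have h1 := D.ν_pos (es k)
      have h2 := D.ν_pos (μ₁ n)
      have h3 : D.ν (μ₁ n) ≤ 1 := (lt_of_lt_of_le (hμ₁b n) (hb1 n)).le
      nlinarith
    · simpa using hes0.const_mul (3:ℝ)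
  have hPcomp : ∀ n, IsCompact (insert (x n) (Set.range (fun k => y n k))) :=
    fun n => (hytend n).isCompact_insert_range
  -- subsequence converging in K
  obtain ⟨xs, hxsK, φ, hφ, hφt⟩ := hK.tendsto_subseq hxK
  have hφn : ∀ n, n ≤ φ n := fun n => hφ.le_apply
  have hmono : ∀ n : ℕ, 1/((φ n : ℝ)+1) ≤ 1/((n:ℝ)+1) := by
    intro n
    apply one_div_le_one_div_of_le
    · positivity
    · exact_mod_cast Nat.succ_le_succ (hφn n)
  obtain ⟨Kstar, hKseq⟩ : ∃ S : Set X,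
      S = K ∪ insert xs (⋃ n, insert (x (φ n)) (Set.range (fun k => y (φ n) k))) :=
    ⟨_, rfl⟩
  have hKstar : IsCompact Kstar := by
    rw [hKseq]
    apply hK.union
    apply isCompact_insert_iUnion_of_shrinking xs _ (fun n => hPcomp (φ n))
      (fun n : ℕ => 3 * b (φ n) + dist (x (φ n)) xs)
    · -- tendsto 0
      apply squeeze_zero
      · intro n
        have := hb0 (φ n)
        have := dist_nonneg (x := x (φ n)) (y := xs)
        linarith
      · intro n
        show 3 * b (φ n) + dist (x (φ n)) xs ≤ 3 * (1/((n:ℝ)+1)) + dist (x (φ n)) xs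
        have := (hbn (φ n)).trans (hmono n)
        linarith
      · have h1 : Filter.Tendsto (fun n : ℕ => 3 * (1/((n:ℝ)+1))) Filter.atTop (nhds 0) := by
          have := tendsto_one_div_add_atTop_nhds_zero_nat (𝕜 := ℝ)
          simpa using this.const_mul (3:ℝ)
        have h2 : Filter.Tendsto (fun n => dist (x (φ n)) xs) Filter.atTop (nhds 0) :=
          tendsto_iff_dist_tendsto_zero.1 hφt
        simpa using h1.add h2
    · -- subset of closed balls
      intro n z hz
      rw [mem_closedBall]
      rcases hz with rfl | ⟨k, rfl⟩
      · have := hb0 (φ n)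
        linarith
      · have h1 : dist (y (φ n) k) xs ≤ dist (y (φ n) k) (x (φ n)) + dist (x (φ n)) xs :=
          dist_triangle _ _ _
        have h2 := hyxb (φ n) k
        have h3 : D.ν (μ₁ (φ n)) ≤ b (φ n) := (hμ₁b (φ n)).le
        linarith
  obtain ⟨θs, hθs0, -, hPREs⟩ := D.toDilatationStructure.main_tech Kstar hKstar
  -- fixed small μ̂
  obtain ⟨μh, hμh0, hμhlt⟩ := D.toDilatationStructure.exists_nu_between g hg 0
    (min (min θs 1) (D.rA/(3*L))) le_rfl
    ((min_le_left _ _).trans (min_le_right _ _))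
    (by positivity)
  have hσθ : D.ν μh < θs := lt_of_lt_of_le hμhlt ((min_le_left _ _).trans (min_le_left _ _))
  have hσ1 : D.ν μh < 1 := lt_of_lt_of_le hμhlt ((min_le_left _ _).trans (min_le_right _ _))
  have hσrA : D.ν μh < D.rA/(3*L) := lt_of_lt_of_le hμhlt (min_le_right _ _)
  have hσ0 : 0 < D.ν μh := D.ν_pos μh
  -- choose N
  obtain ⟨N, hN⟩ := exists_nat_one_div_lt (show (0:ℝ) < D.ν μh / 3 by positivity)
  have hμ₁N : 3 * D.ν (μ₁ (φ N)) < D.ν μh := by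
    have h1 : D.ν (μ₁ (φ N)) < b (φ N) := hμ₁b (φ N)
    have h2 := (hbn (φ N)).trans (hmono N)
    linarith
  -- memberships of A-images
  have hAu : A (u (φ N)) ∈ D.U (A (x (φ N))) := by
    apply D.closedBall_subset_U
    rw [mem_closedBall]
    have h1 : dist (A (u (φ N))) (A (x (φ N))) ≤ L * dist (u (φ N)) (x (φ N)) := hLd _ _
    have h2 : dist (u (φ N)) (x (φ N)) ≤ C (φ N) := by rw [dist_comm]; exact hdxu (φ N)
    have h3 := hCrA (φ N)
    have h4 : L * dist (u (φ N)) (x (φ N)) ≤ L * (D.rA/(4*L)) :=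
      mul_le_mul_of_nonneg_left (h2.trans h3) hL0.le
    have h5 : L * (D.rA/(4*L)) = D.rA/4 := by field_simp
    linarith
  -- per-k identity
  have hid : ∀ k, A (D.toDilatationStructure.invOp (es k) (x (φ N)) (u (φ N))) =
      D.toDilatationStructure.invOp (es k) (A (x (φ N))) (A (u (φ N))) := by
    intro k
    have hymem : y (φ N) k ∈ Kstar := by
      rw [hKseq]
      right
      exact mem_insert_of_mem _ (mem_iUnion.2 ⟨N, mem_insert_of_mem _ ⟨k, rfl⟩⟩)
    have hxy : dist (x (φ N)) (y (φ N) k) < D.ν (es k) * D.ν μh := by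
      rw [dist_comm]
      have h1 := hyx (φ N) k
      have h2 := D.ν_pos (es k)
      calc dist (y (φ N) k) (x (φ N)) < 3 * (D.ν (es k) * D.ν (μ₁ (φ N))) := h1
      _ = D.ν (es k) * (3 * D.ν (μ₁ (φ N))) := by ring
      _ < D.ν (es k) * D.ν μh := mul_lt_mul_of_pos_left hμ₁N h2
    obtain ⟨p, hδp, hpU, hpd, -⟩ := hPREs (y (φ N) k) hymem (es k) μh (hes1 k) hσθ hσ1
      (x (φ N)) hxy
    have hAp : A p ∈ D.U (A (y (φ N) k)) := by
      apply D.closedBall_subset_U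
      rw [mem_closedBall]
      have h1 : dist (A p) (A (y (φ N) k)) ≤ L * dist p (y (φ N) k) := hLd _ _
      have h2 : dist p (y (φ N) k) ≤ 3 * D.ν μh := hpd.le
      have h4 : L * (3 * (D.rA / (3*L))) = D.rA := by field_simp
      have h5 : L * dist p (y (φ N) k) ≤ L * (3 * (D.rA / (3*L))) :=
        mul_le_mul_of_nonneg_left (by linarith) hL0.le
      linarith
    rw [hyeq] at hδp hpU hAp
    exact D.toDilatationStructure.inv_comm hA (es k) (x (φ N)) (u (φ N)) (hes1 k)
      (hUu (φ N)) hAu p hδp hpU hAp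
  -- pass to the limit
  have hkey : ∀ η > (0:ℝ),
      dist (A (D.invLim (x (φ N)) (u (φ N)))) (D.invLim (A (x (φ N))) (A (u (φ N)))) ≤
        (L+1) * η := by
    intro η hη
    obtain ⟨θ₁, hθ₁0, h₁⟩ := hconvK η hη
    obtain ⟨θ₂, hθ₂0, h₂⟩ := hconvK' η hη
    obtain ⟨k, hk⟩ := (hes0.eventually (gt_mem_nhds (lt_min hθ₁0 hθ₂0))).exists
    have hk1 : D.ν (es k) < θ₁ := lt_of_lt_of_le hk (min_le_left _ _)
    have hk2 : D.ν (es k) < θ₂ := lt_of_lt_of_le hk (min_le_right _ _)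
    have h₁app := h₁ (es k) hk1 (x (φ N)) (hxK (φ N)) (u (φ N))
      (by
        rw [mem_closedBall, dist_comm]
        exact (hdxu (φ N)).trans (hCRK (φ N)))
    have h₂app := h₂ (es k) hk2 (A (x (φ N))) (mem_image_of_mem A (hxK (φ N)))
      (A (u (φ N)))
      (by
        rw [mem_closedBall]
        have h1 : dist (A (u (φ N))) (A (x (φ N))) ≤ L * dist (u (φ N)) (x (φ N)) := hLd _ _
        have h2 : dist (u (φ N)) (x (φ N)) ≤ RK'/L := by
          rw [dist_comm]; exact (hdxu (φ N)).trans (hCRK' (φ N))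
        have h3 : L * (RK'/L) = RK' := by field_simp
        have h4 : L * dist (u (φ N)) (x (φ N)) ≤ L * (RK'/L) :=
          mul_le_mul_of_nonneg_left h2 hL0.le
        linarith)
    have e₁ : dist (D.toDilatationStructure.invOp (es k) (x (φ N)) (u (φ N)))
        (D.invLim (x (φ N)) (u (φ N))) < η := h₁app
    have e₂ : dist (D.toDilatationStructure.invOp (es k) (A (x (φ N))) (A (u (φ N))))
        (D.invLim (A (x (φ N))) (A (u (φ N)))) < η := h₂app
    have h3 : dist (A (D.invLim (x (φ N)) (u (φ N))))
        (A (D.toDilatationStructure.invOp (es k) (x (φ N)) (u (φ N)))) ≤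
        L * dist (D.invLim (x (φ N)) (u (φ N)))
          (D.toDilatationStructure.invOp (es k) (x (φ N)) (u (φ N))) := hLd _ _
    have h4 : dist (D.invLim (x (φ N)) (u (φ N)))
        (D.toDilatationStructure.invOp (es k) (x (φ N)) (u (φ N))) < η := by
      rw [dist_comm]; exact e₁
    calc dist (A (D.invLim (x (φ N)) (u (φ N)))) (D.invLim (A (x (φ N))) (A (u (φ N))))
        ≤ dist (A (D.invLim (x (φ N)) (u (φ N))))
            (A (D.toDilatationStructure.invOp (es k) (x (φ N)) (u (φ N)))) +
          dist (A (D.toDilatationStructure.invOp (es k) (x (φ N)) (u (φ N))))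
            (D.invLim (A (x (φ N))) (A (u (φ N)))) := dist_triangle _ _ _
    _ ≤ L * η + η := by
        have e₂' : dist (A (D.toDilatationStructure.invOp (es k) (x (φ N)) (u (φ N))))
            (D.invLim (A (x (φ N))) (A (u (φ N)))) < η := by
          rw [hid k]; exact e₂
        have h5 : L * dist (D.invLim (x (φ N)) (u (φ N)))
            (D.toDilatationStructure.invOp (es k) (x (φ N)) (u (φ N))) ≤ L * η :=
          mul_le_mul_of_nonneg_left h4.le hL0.le
        linarith
    _ = (L+1) * η := by ring
  have heq : A (D.invLim (x (φ N)) (u (φ N))) = D.invLim (A (x (φ N))) (A (u (φ N))) := by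
    apply eq_of_dist_eq_zero
    by_contra hd
    have hd0 : 0 < dist (A (D.invLim (x (φ N)) (u (φ N))))
        (D.invLim (A (x (φ N))) (A (u (φ N)))) :=
      lt_of_le_of_ne dist_nonneg (Ne.symm hd)
    have := hkey (dist (A (D.invLim (x (φ N)) (u (φ N))))
        (D.invLim (A (x (φ N))) (A (u (φ N)))) / (2*(L+1))) (by positivity)
    have hL1' : (L+1) * (dist (A (D.invLim (x (φ N)) (u (φ N))))
        (D.invLim (A (x (φ N))) (A (u (φ N)))) / (2*(L+1))) =
        dist (A (D.invLim (x (φ N)) (u (φ N))))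
          (D.invLim (A (x (φ N))) (A (u (φ N)))) / 2 := by
      field_simp
    linarith
  exact hne (φ N) heq

end StrongDilatationStructure


/-- **Proposition.**  Let `(X,d,δ)` be a dilatation structure and `A : X → X` a linear
transformation.  Then (a) `A Σ_ε^x(u,v) = Σ_ε^{A x}(A u, A v)` for `u, v ∈ U(x)`
sufficiently close to `x`; and (b) if the dilatation structure is strong, then
`A inv^x(u) = inv^{A x}(A u)` for `u` sufficiently close to `x`. -/
theorem linear_transform_commutes_with_sum_and_inv
    (D : StrongDilatationStructure Γ X) (A : X → X)
    (hA : D.toDilatationStructure.IsLinearTransform A) :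
    (∀ K : Set X, IsCompact K → ∃ C > 0, ∀ ε : Γ, D.ν ε < 1 →
      ∀ x ∈ K, ∀ u ∈ K, ∀ v ∈ K,
        dist x u ≤ C → dist x v ≤ C → dist u v ≤ C → u ∈ D.U x → v ∈ D.U x →
          A (D.sumOp ε x u v) = D.sumOp ε (A x) (A u) (A v)) ∧
    (∀ K : Set X, IsCompact K → ∃ C > 0, ∀ x ∈ K, ∀ u ∈ K,
      dist x u ≤ C → u ∈ D.U x →
        A (D.invLim x u) = D.invLim (A x) (A u)) := by
  constructor
  · intro K hK
    exact D.toDilatationStructure.part_a A hA K hK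
  · intro K hK
    exact D.part_b A hA K hK
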